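/- Assume: (a) ℵ0 = cf(λ) ≤ κ < λ; (b) ⟨λ_i : i < κ⟩ is a sequence of cardinals; (c) lim_D(⟨λ_i : i < κ⟩) = λ; (d) λ is κ-strong; (e) D is an ultrafilter on κ; (f) there is a ⊆-descending sequence ⟨A_n : n < ω⟩ of members of D whose intersection does not belong to D. Then the cardinality of ∏_{i<κ} λ_i / D is not equal to λ. -/

import Mathlib

universe u

open Cardinal Set

/-- Members of the product `∏_{i} λ_i`: functions choosing an ordinal below `(λ i).ord`
for every index `i`. -/
def ProdFun {ι : Type u} (lam : ι → Cardinal.{u}) : Type (u + 1) :=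
  {f : ι → Ordinal.{u} // ∀ i, f i < (lam i).ord}

/-- `D`-equality of members of the product. -/
def prodEquiv {ι : Type u} (D : Ultrafilter ι) (lam : ι → Cardinal.{u})
    (f g : ProdFun lam) : Prop :=
  {i | f.1 i = g.1 i} ∈ D

/-- The reduced product `∏_{i} λ_i / D`. -/
def ProdQuot {ι : Type u} (D : Ultrafilter ι) (lam : ι → Cardinal.{u}) : Type (u + 1) :=
  Quot (prodEquiv D lam)

/-- The cardinality of the reduced product `∏_{i} λ_i / D`. -/
noncomputable def prodCard {ι : Type u} (D : Ultrafilter ι) (lam : ι → Cardinal.{u}) :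
    Cardinal.{u + 1} :=
  Cardinal.mk (ProdQuot D lam)

/-- `μ = lim_D ⟨λ_i : i < κ⟩` : for every `β < μ`, the set `{i : β < λ_i ≤ μ}` is in `D`. -/
def IsLimD {ι : Type u} (D : Ultrafilter ι) (lam : ι → Cardinal.{u}) (μ : Cardinal.{u}) :
    Prop :=
  ∀ β < μ, {i | β < lam i ∧ lam i ≤ μ} ∈ D

/-- `prodEquiv` is an equivalence relation. -/
theorem prodEquiv_equivalence {ι : Type u} (D : Ultrafilter ι) (lam : ι → Cardinal.{u}) :
    Equivalence (prodEquiv D lam) := by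
  constructor
  · intro f
    show {i | f.1 i = f.1 i} ∈ D
    have : {i | f.1 i = f.1 i} = Set.univ := by ext i; simp
    rw [this]
    exact Filter.univ_mem
  · intro f g h
    show {i | g.1 i = f.1 i} ∈ D
    exact Filter.mem_of_superset h fun i hi => (hi : f.1 i = g.1 i).symm
  · intro f g h hfg hgh
    show {i | f.1 i = h.1 i} ∈ D
    exact Filter.mem_of_superset (Filter.inter_mem hfg hgh) fun i hi =>
      (hi.1 : f.1 i = g.1 i).trans hi.2

theorem stmt_13 {ι : Type u} (κ la : Cardinal.{u}) (hι : #ι = κ)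
    (hcf : la.ord.cof = ℵ₀) (hκ : ℵ₀ ≤ κ) (hκla : κ < la)
    (lam : ι → Cardinal.{u}) (D : Ultrafilter ι)
    (hlim : IsLimD D lam la)
    (hstrong : ∀ α < la, α ^ κ < la)
    (A : ℕ → Set ι) (hAD : ∀ n, A n ∈ D) (hAdesc : ∀ n, A (n + 1) ⊆ A n)
    (hAint : (⋂ n, A n) ∉ D) :
    prodCard D lam ≠ Cardinal.lift.{u + 1} la := by
  classical
  have hla_inf : ℵ₀ ≤ la := hκ.trans hκla.le
  -- degenerate case: some `lam i = 0`
  by_cases hzero : ∃ i, lam i = 0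
  · obtain ⟨i0, hi0⟩ := hzero
    have hempty : IsEmpty (ProdFun lam) := ⟨fun f => by
      have h := f.2 i0
      rw [hi0, Cardinal.ord_zero] at h
      exact not_lt_zero h⟩
    have hq : IsEmpty (ProdQuot D lam) :=
      ⟨fun q => Quot.ind (β := fun _ => False) (fun f => hempty.false f) q⟩
    intro h
    have h0 : prodCard D lam = 0 := @Cardinal.mk_eq_zero _ hq
    rw [h0] at h
    have hla0 : la = 0 := by
      have := h.symm
      rwa [Cardinal.lift_eq_zero] at this
    rw [hla0] at hla_inf
    exact Cardinal.aleph0_ne_zero (le_zero_iff.mp hla_inf)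
  push_neg at hzero
  have hpos : ∀ i, (0 : Ordinal) < (lam i).ord := by
    intro i
    rw [pos_iff_ne_zero]
    intro h
    exact hzero i (Cardinal.ord_eq_zero.1 h)
  -- `la` is a limit cardinal
  have hsucc_lt : ∀ β < la, Order.succ β < la := by
    intro β hβ
    rcases lt_or_ge β ℵ₀ with hb | hb
    · have h1 : Order.succ β ≤ ℵ₀ := Order.succ_le_of_lt hb
      exact lt_of_le_of_lt (h1.trans hκ) hκla
    · have h1 : Order.succ β ≤ la := Order.succ_le_of_lt hβ
      rcases h1.lt_or_eq with h2 | h2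
      · exact h2
      · exfalso
        have hreg := Cardinal.isRegular_succ hb
        have h3 : Order.succ β ≤ (Order.succ β).ord.cof := hreg.2
        rw [h2, hcf] at h3
        exact absurd hκla (not_lt.2 (h3.trans hκ))
  -- a cofinal ω-sequence in `la`
  obtain ⟨ι', f, hlsub, hmk⟩ := Ordinal.exists_lsub_cof la.ord
  rw [hcf] at hmk
  have hmk' : #ι' = #(ULift.{u} ℕ) := by
    rw [hmk, Cardinal.mk_denumerable]
  obtain ⟨eqv⟩ := Cardinal.eq.1 hmk'
  set g : ℕ → Ordinal.{u} := fun n => f (eqv.symm ⟨n⟩) with hg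
  have hglt : ∀ n, g n < la.ord := fun n => hlsub ▸ Ordinal.lt_lsub f _
  set μ : ℕ → Cardinal.{u} := fun n => (g n).card with hμdef
  have hμlt : ∀ n, μ n < la := fun n => Cardinal.lt_ord.1 (hglt n)
  -- the auxiliary sequences `c` and `ν`
  set c : ℕ → Cardinal.{u} := fun n => Nat.rec (κ ⊔ μ 0) (fun n ih => ih ⊔ μ (n + 1)) n with hc
  have hcκ : ∀ n, κ ≤ c n := by
    intro n; induction n with
    | zero => exact le_sup_left
    | succ n ih => exact ih.trans le_sup_left
  have hcμ : ∀ n, μ n ≤ c n := by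
    intro n; cases n with
    | zero => exact le_sup_right
    | succ n => exact le_sup_right
  have hcmono : Monotone c := monotone_nat_of_le_succ fun n => le_sup_left
  have hclt : ∀ n, c n < la := by
    intro n; induction n with
    | zero => exact max_lt hκla (hμlt 0)
    | succ n ih => exact max_lt ih (hμlt (n + 1))
  have hcinf : ∀ n, ℵ₀ ≤ c n := fun n => hκ.trans (hcκ n)
  set ν : ℕ → Cardinal.{u} := fun n => (Order.succ (c n)) ^ κ with hν
  have hκ1 : (1 : Cardinal) ≤ κ := le_trans Cardinal.one_le_aleph0 hκ
  have hν_ge : ∀ n, Order.succ (c n) ≤ ν n := fun n => Cardinal.self_le_power _ hκ1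
  have hνinf : ∀ n, ℵ₀ ≤ ν n := fun n =>
    (hcinf n).trans ((Order.lt_succ (c n)).le.trans (hν_ge n))
  have hνlt : ∀ n, ν n < la := fun n => hstrong _ (hsucc_lt _ (hclt n))
  have hνmono : Monotone ν := fun m n h =>
    Cardinal.power_le_power_right (Order.succ_le_succ (hcmono h))
  have hνκ : ∀ n, ν n ^ κ = ν n := by
    intro n
    rw [hν]
    rw [← Cardinal.power_mul, Cardinal.mul_eq_self hκ]
  have hμν : ∀ n, μ n + 1 < ν n := by
    intro n
    have h1 : μ n + 1 ≤ c n + 1 := add_le_add_left (hcμ n) 1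
    rw [Cardinal.add_one_of_aleph0_le (hcinf n)] at h1
    exact h1.trans_lt (lt_of_lt_of_le (Order.lt_succ _) (hν_ge n))
  -- `la < prod ν` by König
  have hsum : la ≤ Cardinal.sum (fun n : ℕ => μ n + 1) := by
    have h1 : la.ord ≤ iSup (fun n : ℕ => g n + 1) := by
      rw [← hlsub]
      apply Ordinal.lsub_le_iff.2
      intro i
      have hi : f i = g ((eqv i).down) := by
        rw [hg]
        exact (congrArg f (eqv.symm_apply_apply i)).symm
      calc f i < g ((eqv i).down) + 1 := by
            rw [← hi, Ordinal.add_one_eq_succ]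
            exact Order.lt_succ _
        _ ≤ iSup (fun n : ℕ => g n + 1) := Ordinal.le_iSup _ _
    have h2 := Ordinal.card_le_card h1
    rw [Cardinal.card_ord] at h2
    refine h2.trans ?_
    have h3 := Ordinal.card_iSup_le_sum_card (fun n : ℕ => g n + 1)
    have h4 : (fun n : ℕ => (g n + 1).card) = fun n : ℕ => μ n + 1 := by
      funext n
      rw [Ordinal.add_one_eq_succ, Ordinal.card_succ]
    rwa [h4] at h3
  have hprod : la < Cardinal.prod ν :=
    lt_of_le_of_lt hsum (Cardinal.sum_lt_prod _ _ hμν)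
  -- the refined descending sequence `A'`
  set B : ℕ → Set ι := fun m => {i | ν m < lam i ∧ lam i ≤ la} with hB
  have hBD : ∀ m, B m ∈ D := fun m => hlim (ν m) (hνlt m)
  set A' : ℕ → Set ι := fun n => A n ∩ ⋂ m ∈ Finset.range (n + 1), B m with hA'
  have hA'D : ∀ n, A' n ∈ D := fun n =>
    Filter.inter_mem (hAD n) ((Filter.biInter_finset_mem _).2 fun m _ => hBD m)
  have hA'subA : ∀ n, A' n ⊆ A n := fun n => inter_subset_left
  have hA'B : ∀ n, A' n ⊆ B n := fun n i hi =>
    (mem_iInter₂.1 hi.2) n (Finset.self_mem_range_succ n)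
  have hAmono : ∀ {m n : ℕ}, m ≤ n → A n ⊆ A m := by
    intro m n h
    induction h with
    | refl => exact subset_rfl
    | step h ih => exact fun i hi => ih (hAdesc _ hi)
  have hA'mono : ∀ {m n : ℕ}, m ≤ n → A' n ⊆ A' m := by
    intro m n h i hi
    refine ⟨hAmono h hi.1, mem_iInter₂.2 fun k hk => (mem_iInter₂.1 hi.2) k ?_⟩
    rw [Finset.mem_range] at hk ⊢
    omega
  have hA'int : (⋂ n, A' n) ∉ D := by
    intro h
    exact hAint (Filter.mem_of_superset h (iInter_mono fun n => hA'subA n))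
  -- level function `d`
  set P : ι → Prop := fun i => ∃ n, i ∉ A' n with hP
  set d : ι → ℕ := fun i => if h : P i then Nat.find h - 1 else 0 with hd
  have hd_eq : ∀ i (h : P i), d i = Nat.find h - 1 := by
    intro i h
    rw [hd]
    exact dif_pos h
  have hd_mem : ∀ i (h : P i), i ∈ A' 0 → i ∈ A' (d i) := by
    intro i h h0
    have hne : Nat.find h ≠ 0 := by
      intro h1
      exact (h1 ▸ Nat.find_spec h) h0
    rw [hd_eq i h]
    by_contra hmem
    exact Nat.find_min h (by omega) hmem
  have hd_ge : ∀ i (h : P i) (n : ℕ), i ∈ A' n → n ≤ d i := by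
    intro i h n hn
    have hfind : i ∉ A' (Nat.find h) := Nat.find_spec h
    have hlt : n < Nat.find h := by
      by_contra hcon
      push_neg at hcon
      exact hfind (hA'mono hcon hn)
    rw [hd_eq i h]
    omega
  -- coding embeddings
  have hcode : ∀ n : ℕ,
      Nonempty ((∀ m : Fin (n + 1), (Iio ((ν (m : ℕ)).ord))) ↪ (Iio ((ν n).ord))) := by
    intro n
    rw [← Cardinal.le_def]
    have hsub : ∀ m : Fin (n + 1), Iio ((ν (m : ℕ)).ord) ⊆ Iio ((ν n).ord) := fun m =>
      Iio_subset_Iio (Cardinal.ord_le_ord.2 (hνmono (Nat.lt_succ_iff.1 m.2)))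
    have e1 : (∀ m : Fin (n + 1), ↥(Iio ((ν (m : ℕ)).ord))) ↪ (Fin (n + 1) → ↥(Iio ((ν n).ord))) :=
      Function.Embedding.piCongrRight fun m =>
        ⟨Set.inclusion (hsub m), Set.inclusion_injective (hsub m)⟩
    refine (Cardinal.mk_le_of_injective e1.injective).trans ?_
    rw [Cardinal.mk_arrow, Ordinal.mk_Iio_ordinal, Cardinal.card_ord, Cardinal.lift_id',
      Cardinal.mk_fintype, Fintype.card_fin, Cardinal.lift_natCast]
    have hne0 : Cardinal.lift.{u + 1} (ν n) ≠ 0 := by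
      simp only [ne_eq, Cardinal.lift_eq_zero]
      exact ne_of_gt (Cardinal.aleph0_pos.trans_le (hνinf n))
    calc Cardinal.lift.{u + 1} (ν n) ^ ((n + 1 : ℕ) : Cardinal)
        ≤ Cardinal.lift.{u + 1} (ν n) ^ Cardinal.lift.{u + 1} κ := by
          apply Cardinal.power_le_power_left hne0
          calc ((n + 1 : ℕ) : Cardinal) ≤ ℵ₀ := (Cardinal.nat_lt_aleph0 _).le
            _ = Cardinal.lift.{u + 1} ℵ₀ := Cardinal.lift_aleph0.symm
            _ ≤ _ := Cardinal.lift_le.2 hκ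
      _ = Cardinal.lift.{u + 1} (ν n ^ κ) := (Cardinal.lift_power _ _).symm
      _ = Cardinal.lift.{u + 1} (ν n) := by rw [hνκ n]
  have e : ∀ n : ℕ,
      ((∀ m : Fin (n + 1), (Iio ((ν (m : ℕ)).ord))) ↪ (Iio ((ν n).ord))) :=
    fun n => (hcode n).some
  -- the map into the reduced product
  set G0 : (∀ n : ℕ, ↥(Iio ((ν n).ord))) → ι → Ordinal.{u} := fun η i =>
    if h : P i ∧ i ∈ A' 0 then ((e (d i)) (fun m => η (m : ℕ))).1 else 0 with hG0def
  have hν_lam : ∀ i n, i ∈ A' n → (ν n).ord ≤ (lam i).ord := fun i n hi =>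
    Cardinal.ord_le_ord.2 (le_of_lt (hA'B n hi).1)
  have hG0 : ∀ η i, G0 η i < (lam i).ord := by
    intro η i
    rw [hG0def]
    dsimp only
    split_ifs with h
    · have h1 : (((e (d i)) (fun m => η (m : ℕ))) : Ordinal) < (ν (d i)).ord :=
        ((e (d i)) (fun m => η (m : ℕ))).2
      exact h1.trans_le (hν_lam i (d i) (hd_mem i h.1 h.2))
    · exact hpos i
  set Φ : (∀ n : ℕ, ↥(Iio ((ν n).ord))) → ProdQuot D lam := fun η =>
    Quot.mk _ ⟨G0 η, hG0 η⟩ with hΦdef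
  have hequiv := prodEquiv_equivalence D lam
  have hΦinj : Function.Injective Φ := by
    intro η η' hΦeq
    by_contra hne
    have hD : {i | G0 η i = G0 η' i} ∈ D := by
      have h1 := Quot.eq.1 hΦeq
      exact (hequiv.eqvGen_iff).1 h1
    obtain ⟨n₀, hn₀⟩ : ∃ n, η n ≠ η' n := by
      by_contra hcon
      push_neg at hcon
      exact hne (funext hcon)
    have hS : (A' n₀ ∩ (⋂ n, A' n)ᶜ ∩ {i | G0 η i = G0 η' i}) ∈ D :=
      Filter.inter_mem
        (Filter.inter_mem (hA'D n₀) (Ultrafilter.compl_mem_iff_notMem.2 hA'int)) hD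
    obtain ⟨i, ⟨⟨hiA, hiC⟩, hieq⟩⟩ := Filter.nonempty_of_mem hS
    have hPi : P i := by
      rw [mem_compl_iff, mem_iInter] at hiC
      push_neg at hiC
      exact hiC
    have hi0 : i ∈ A' 0 := hA'mono (Nat.zero_le n₀) hiA
    have hcond : P i ∧ i ∈ A' 0 := ⟨hPi, hi0⟩
    have hdge : n₀ ≤ d i := hd_ge i hPi n₀ hiA
    have heq : ((e (d i)) (fun m => η (m : ℕ))) = ((e (d i)) (fun m => η' (m : ℕ))) := by
      have h2 : G0 η i = G0 η' i := hieq
      rw [hG0def] at h2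
      dsimp only at h2
      rw [dif_pos hcond, dif_pos hcond] at h2
      exact Subtype.ext h2
    have h3 := congrFun ((e (d i)).injective heq) ⟨n₀, by omega⟩
    exact hn₀ h3
  -- conclude
  intro hEq
  have h1 : #(∀ n : ℕ, ↥(Iio ((ν n).ord))) ≤ prodCard D lam :=
    Cardinal.mk_le_of_injective hΦinj
  have hT : #(∀ n : ℕ, ↥(Iio ((ν n).ord))) = Cardinal.lift.{u + 1} (Cardinal.prod ν) := by
    rw [Cardinal.mk_pi, Cardinal.lift_prod]
    congr 1
    funext n
    rw [Ordinal.mk_Iio_ordinal, Cardinal.card_ord]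
  have h2 : Cardinal.lift.{u + 1} la < #(∀ n : ℕ, ↥(Iio ((ν n).ord))) := by
    rw [hT]
    exact Cardinal.lift_lt.2 hprod
  rw [hEq] at h1
  exact absurd (h2.trans_le h1) (lt_irrefl _)
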